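/- arXiv:quant-ph/0302121 — 3 statements merged into one kernel-verified Lean document; each statement's English description precedes it below -/
import Mathlib

section
/- For a two-level system: the Lie algebra generated by iH₀ and iH₁, where H₀ = diag(E₁,E₂) with E₁ ≠ E₂ and H₁ has (1,2) and (2,1) entries equal to d ≠ 0 and zero diagonal, equals u(2) if E₁ + E₂ ≠ 0, and equals su(2) plus the span of i(E₁+E₂)I otherwise; in particular it contains su(2). -/
open Matrix

attribute [local instance 100] LieRing.ofAssociativeRing

namespace TwoLevelAux

noncomputable def uTwo : LieSubalgebra ℝ (Matrix (Fin 2) (Fin 2) ℂ) where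
  carrier := {X | Xᴴ = -X}
  add_mem' := by
    intro a b ha hb
    simp only [Set.mem_setOf_eq] at *
    rw [conjTranspose_add, ha, hb, neg_add]
  zero_mem' := by simp [Set.mem_setOf_eq]
  smul_mem' := by
    intro r X hX
    simp only [Set.mem_setOf_eq] at *
    rw [conjTranspose_smul, star_trivial, hX, smul_neg]
  lie_mem' := by
    intro x y hx hy
    simp only [Set.mem_setOf_eq] at *
    simp only [Ring.lie_def, conjTranspose_sub, conjTranspose_mul, hx, hy,
      neg_mul_neg, neg_sub]

noncomputable def suTwo : LieSubalgebra ℝ (Matrix (Fin 2) (Fin 2) ℂ) where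
  carrier := {X | Xᴴ = -X ∧ X.trace = 0}
  add_mem' := by
    rintro a b ⟨ha1, ha2⟩ ⟨hb1, hb2⟩
    refine ⟨?_, ?_⟩
    · rw [conjTranspose_add, ha1, hb1, neg_add]
    · rw [trace_add, ha2, hb2, add_zero]
  zero_mem' := by simp [Set.mem_setOf_eq]
  smul_mem' := by
    rintro r X ⟨h1, h2⟩
    refine ⟨?_, ?_⟩
    · rw [conjTranspose_smul, star_trivial, h1, smul_neg]
    · rw [trace_smul, h2, smul_zero]
  lie_mem' := by
    rintro x y ⟨hx1, _⟩ ⟨hy1, _⟩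
    refine ⟨?_, ?_⟩
    · simp only [Ring.lie_def, conjTranspose_sub, conjTranspose_mul, hx1, hy1,
        neg_mul_neg, neg_sub]
    · simp [Ring.lie_def, Matrix.trace_mul_comm x y]

noncomputable def Mx : Matrix (Fin 2) (Fin 2) ℂ := Matrix.of ![![0, Complex.I], ![Complex.I, 0]]
noncomputable def My : Matrix (Fin 2) (Fin 2) ℂ := Matrix.of ![![0, 1], ![-1, 0]]
noncomputable def Mz : Matrix (Fin 2) (Fin 2) ℂ := Matrix.of ![![Complex.I, 0], ![0, -Complex.I]]

end TwoLevelAux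

open TwoLevelAux in
/-- For a two-level system with H₀ = diag(E₁,E₂), E₁ ≠ E₂, and off-diagonal
coupling H₁ with entry d ≠ 0, the real Lie algebra generated by iH₀ and iH₁
equals u(2) if E₁+E₂ ≠ 0 and su(2) (= su(2) plus the span of i(E₁+E₂)I = 0)
otherwise; in particular it always contains su(2). -/
theorem two_level_dynamical_lie_algebra (E₁ E₂ d : ℝ) (hE : E₁ ≠ E₂) (hd : d ≠ 0)
    (H₀ H₁ : Matrix (Fin 2) (Fin 2) ℂ)
    (hH₀ : H₀ = Matrix.of ![![(E₁ : ℂ), 0], ![0, (E₂ : ℂ)]])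
    (hH₁ : H₁ = Matrix.of ![![0, (d : ℂ)], ![(d : ℂ), 0]])
    (L : LieSubalgebra ℝ (Matrix (Fin 2) (Fin 2) ℂ))
    (hL : L = LieSubalgebra.lieSpan ℝ (Matrix (Fin 2) (Fin 2) ℂ)
      {Complex.I • H₀, Complex.I • H₁}) :
    (E₁ + E₂ ≠ 0 → ∀ X : Matrix (Fin 2) (Fin 2) ℂ, X ∈ L ↔ Xᴴ = -X) ∧
    (E₁ + E₂ = 0 → ∀ X : Matrix (Fin 2) (Fin 2) ℂ,
      X ∈ L ↔ (Xᴴ = -X ∧ X.trace = 0)) ∧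
    (∀ X : Matrix (Fin 2) (Fin 2) ℂ, Xᴴ = -X → X.trace = 0 → X ∈ L) := by
  -- the generators are in L
  have hA : Complex.I • H₀ ∈ L := by
    rw [hL]; exact LieSubalgebra.subset_lieSpan (by simp)
  have hB : Complex.I • H₁ ∈ L := by
    rw [hL]; exact LieSubalgebra.subset_lieSpan (by simp)
  -- bracket computations
  have hbrAB : ⁅Complex.I • H₀, Complex.I • H₁⁆ = ((E₂ - E₁) * d) • My := by
    subst hH₀ hH₁
    ext i j
    fin_cases i <;> fin_cases j <;>
      simp [My, Ring.lie_def, Matrix.mul_apply, Fin.sum_univ_two, Complex.real_smul]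
    all_goals ring_nf
    all_goals simp [Complex.I_sq]
  have hMy : My ∈ L := by
    have h1 : ⁅Complex.I • H₀, Complex.I • H₁⁆ ∈ L := L.lie_mem hA hB
    rw [hbrAB] at h1
    have h2 : ((E₂ - E₁) * d) ≠ 0 := mul_ne_zero (sub_ne_zero.mpr (Ne.symm hE)) hd
    have := L.smul_mem (((E₂ - E₁) * d)⁻¹) h1
    rwa [inv_smul_smul₀ h2] at this
  have hbrBMy : ⁅Complex.I • H₁, My⁆ = (-(2 * d)) • Mz := by
    subst hH₁
    ext i j
    fin_cases i <;> fin_cases j <;>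
      simp [My, Mz, Ring.lie_def, Matrix.mul_apply, Fin.sum_univ_two, Complex.real_smul] <;>
      ring
  have hMz : Mz ∈ L := by
    have h1 : ⁅Complex.I • H₁, My⁆ ∈ L := L.lie_mem hB hMy
    rw [hbrBMy] at h1
    have h2 : (-(2 * d)) ≠ 0 := by simpa using hd
    have := L.smul_mem ((-(2 * d))⁻¹) h1
    rwa [inv_smul_smul₀ h2] at this
  have hMx : Mx ∈ L := by
    have hBeq : Complex.I • H₁ = d • Mx := by
      subst hH₁
      ext i j
      fin_cases i <;> fin_cases j <;>
        simp [Mx, Complex.real_smul] <;> ring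
    have h1 : d • Mx ∈ L := hBeq ▸ hB
    have := L.smul_mem (d⁻¹) h1
    rwa [inv_smul_smul₀ hd] at this
  -- su(2) ⊆ L
  have hsu : ∀ X : Matrix (Fin 2) (Fin 2) ℂ, Xᴴ = -X → X.trace = 0 → X ∈ L := by
    intro X hs ht
    have h00 : (starRingEnd ℂ) (X 0 0) = -(X 0 0) := by
      have := congrFun (congrFun hs 0) 0
      simpa [conjTranspose_apply] using this
    have h00re : (X 0 0).re = 0 := by
      have := congrArg Complex.re h00
      simp at this
      linarith
    have h11 : X 1 1 = -(X 0 0) := by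
      rw [trace_fin_two] at ht
      linear_combination ht
    have h10 : X 1 0 = -(starRingEnd ℂ) (X 0 1) := by
      have h01 := congrFun (congrFun hs 0) 1
      simp only [conjTranspose_apply, Matrix.neg_apply] at h01
      have h2 := congrArg (starRingEnd ℂ) h01
      simp only [map_neg, Complex.conj_conj, RingHomCompTriple.comp_apply] at h2
      simpa using h2
    have hdecomp : X = (X 0 1).im • Mx + (X 0 1).re • My + (X 0 0).im • Mz := by
      ext i j
      fin_cases i <;> fin_cases j <;>
        simp only [Matrix.add_apply, Matrix.smul_apply, Mx, My, Mz, Matrix.of_apply,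
          Matrix.cons_val_zero, Matrix.cons_val_one, Matrix.head_cons, Matrix.head_fin_const,
          Complex.real_smul, h11, h10]
      · apply Complex.ext <;> simp [h00re]
      · apply Complex.ext <;> simp
      · apply Complex.ext <;> simp [h10]
      · apply Complex.ext <;> simp [h11, h00re]
    rw [hdecomp]
    exact L.add_mem (L.add_mem (L.smul_mem _ hMx) (L.smul_mem _ hMy)) (L.smul_mem _ hMz)
  -- L ⊆ u(2)
  have hLu : ∀ X : Matrix (Fin 2) (Fin 2) ℂ, X ∈ L → Xᴴ = -X := by
    intro X hX
    have hle : L ≤ uTwo := by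
      rw [hL]
      apply LieSubalgebra.lieSpan_le.mpr
      intro Y hY
      rcases hY with hY | hY
      · subst hY hH₀
        show _ᴴ = -_
        ext i j
        fin_cases i <;> fin_cases j <;> simp [conjTranspose_apply]
      · simp only [Set.mem_singleton_iff] at hY
        subst hY hH₁
        show _ᴴ = -_
        ext i j
        fin_cases i <;> fin_cases j <;> simp [conjTranspose_apply]
    exact hle hX
  refine ⟨?_, ?_, hsu⟩
  · -- E₁ + E₂ ≠ 0 case
    intro hsum X
    constructor
    · exact hLu X
    · intro hs
      -- i•1 ∈ L
      have hAdec : Complex.I • H₀ = ((E₁ + E₂)/2) • (Complex.I • (1 : Matrix (Fin 2) (Fin 2) ℂ))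
          + ((E₁ - E₂)/2) • Mz := by
        subst hH₀
        ext i j
        fin_cases i <;> fin_cases j <;>
          simp [Mz, Complex.real_smul, Matrix.one_apply] <;> ring
      have hiI : Complex.I • (1 : Matrix (Fin 2) (Fin 2) ℂ) ∈ L := by
        have h1 : ((E₁ + E₂)/2) • (Complex.I • (1 : Matrix (Fin 2) (Fin 2) ℂ)) ∈ L := by
          have := L.sub_mem hA (L.smul_mem ((E₁ - E₂)/2) hMz)
          rwa [hAdec, add_sub_cancel_right] at this
        have h2 : ((E₁ + E₂)/2) ≠ 0 := by
          intro h; apply hsum; linarith [h]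
        have := L.smul_mem (((E₁ + E₂)/2)⁻¹) h1
        rwa [inv_smul_smul₀ h2] at this
      -- decompose X into traceless part and trace part
      set t : ℝ := (X.trace).im with ht
      have htr : X.trace = (t : ℂ) * Complex.I := by
        have h00 : (starRingEnd ℂ) (X 0 0) = -(X 0 0) := by
          have := congrFun (congrFun hs 0) 0
          simpa [conjTranspose_apply] using this
        have h11 : (starRingEnd ℂ) (X 1 1) = -(X 1 1) := by
          have := congrFun (congrFun hs 1) 1
          simpa [conjTranspose_apply] using this
        have h00re : (X 0 0).re = 0 := by
          have := congrArg Complex.re h00; simp at this; linarith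
        have h11re : (X 1 1).re = 0 := by
          have := congrArg Complex.re h11; simp at this; linarith
        rw [trace_fin_two] at ht ⊢
        apply Complex.ext <;> simp [ht, h00re, h11re]
      have hiIskew : (Complex.I • (1 : Matrix (Fin 2) (Fin 2) ℂ))ᴴ = -(Complex.I • 1) := by
        rw [conjTranspose_smul, conjTranspose_one]
        simp [Complex.star_def, Complex.conj_I]
      have hX' : X - (t/2) • (Complex.I • (1 : Matrix (Fin 2) (Fin 2) ℂ)) ∈ L := by
        apply hsu
        · rw [conjTranspose_sub, hs, conjTranspose_smul, star_trivial, hiIskew, smul_neg]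
          abel
        · rw [trace_sub, htr, trace_smul, trace_smul, trace_one]
          simp only [Complex.real_smul, smul_eq_mul, Fintype.card_fin]
          push_cast
          ring
      have := L.add_mem hX' (L.smul_mem (t/2) hiI)
      rwa [sub_add_cancel] at this
  · -- E₁ + E₂ = 0 case
    intro hsum X
    constructor
    · intro hX
      have hle : L ≤ suTwo := by
        rw [hL]
        apply LieSubalgebra.lieSpan_le.mpr
        intro Y hY
        rcases hY with hY | hY
        · subst hY hH₀
          constructor
          · show _ᴴ = -_
            ext i j
            fin_cases i <;> fin_cases j <;> simp [conjTranspose_apply]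
          · show Matrix.trace _ = 0
            have h : (E₁:ℂ) + (E₂:ℂ) = 0 := by exact_mod_cast congrArg Complex.ofReal hsum
            rw [trace_fin_two]
            simp only [Matrix.smul_apply, Matrix.of_apply, Matrix.cons_val_zero,
              Matrix.cons_val_one, Matrix.head_cons, smul_eq_mul, Matrix.head_fin_const]
            linear_combination Complex.I * h
        · simp only [Set.mem_singleton_iff] at hY
          subst hY hH₁
          constructor
          · show _ᴴ = -_
            ext i j
            fin_cases i <;> fin_cases j <;> simp [conjTranspose_apply]
          · show Matrix.trace _ = 0
            rw [trace_fin_two]; simp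
      exact hle hX
    · rintro ⟨h1, h2⟩
      exact hsu X h1 h2
end

section
/- In the three-level λ-system, the one-dimensional subspace spanned by ψ₋ = (e₁-e₃)/√2 is invariant under every evolution operator in the group generated by exponentials of real linear combinations of iH₀ and iH₁; hence the system is not pure-state controllable. -/
open Matrix NormedSpace

attribute [local instance] Matrix.linftyOpNormedRing Matrix.linftyOpNormedAlgebra

noncomputable def mulVecCLM' (ψ : Fin 3 → ℂ) :
    Matrix (Fin 3) (Fin 3) ℂ →L[ℂ] (Fin 3 → ℂ) :=
  LinearMap.toContinuousLinearMap
    { toFun := fun M => M.mulVec ψ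
      map_add' := fun M N => Matrix.add_mulVec M N ψ
      map_smul' := fun c M => Matrix.smul_mulVec c M ψ }

theorem pow_mulVec_eigen' (A : Matrix (Fin 3) (Fin 3) ℂ) (ψ : Fin 3 → ℂ) (μ : ℂ)
    (h : A.mulVec ψ = μ • ψ) (n : ℕ) : (A ^ n).mulVec ψ = μ ^ n • ψ := by
  induction n with
  | zero => simp [Matrix.one_mulVec]
  | succ n ih =>
    rw [pow_succ, ← Matrix.mulVec_mulVec, h, Matrix.mulVec_smul, ih, smul_smul, pow_succ']

theorem exp_mulVec_eigen' (A : Matrix (Fin 3) (Fin 3) ℂ) (ψ : Fin 3 → ℂ) (μ : ℂ)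
    (h : A.mulVec ψ = μ • ψ) : (exp A).mulVec ψ = exp μ • ψ := by
  have hs : Summable (fun n : ℕ => ((n.factorial : ℝ))⁻¹ • A ^ n) := expSeries_summable' (𝕂 := ℝ) A
  have key : (mulVecCLM' ψ) (∑' n : ℕ, ((n.factorial : ℝ))⁻¹ • A ^ n)
      = ∑' n : ℕ, (mulVecCLM' ψ) (((n.factorial : ℝ))⁻¹ • A ^ n) :=
    ContinuousLinearMap.map_tsum _ hs
  have h1 : ∀ n : ℕ, (mulVecCLM' ψ) (((n.factorial : ℝ))⁻¹ • A ^ n)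
      = (((n.factorial : ℝ))⁻¹ • μ ^ n) • ψ := by
    intro n
    have : (mulVecCLM' ψ) (((n.factorial : ℝ))⁻¹ • A ^ n)
        = ((n.factorial : ℝ))⁻¹ • (A ^ n).mulVec ψ := by
      simp [mulVecCLM', Matrix.smul_mulVec]
    rw [this, pow_mulVec_eigen' A ψ μ h n, smul_assoc]
  have hμ : Summable (fun n : ℕ => ((n.factorial : ℝ))⁻¹ • μ ^ n) := expSeries_summable' (𝕂 := ℝ) μ
  have : (exp A).mulVec ψ = (mulVecCLM' ψ) (exp A) := rfl
  rw [this, exp_eq_tsum ℝ, key]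
  simp_rw [h1]
  rw [hμ.tsum_smul_const, exp_eq_tsum ℝ]


/-- In the three-level λ-system the line spanned by ψ₋ = (e₁-e₃)/√2 is invariant
under every element of the group generated by exponentials of real linear
combinations of iH₀ and iH₁; hence the system is not pure-state controllable. -/
theorem lambda_system_not_pure_state_controllable (E₁ E₂ d : ℝ) (hE : E₁ ≠ E₂)
    (H₀ H₁ : Matrix (Fin 3) (Fin 3) ℂ)
    (hH₀ : H₀ = Matrix.of ![![(E₁ : ℂ), 0, 0], ![0, (E₂ : ℂ), 0], ![0, 0, (E₁ : ℂ)]])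
    (hH₁ : H₁ = Matrix.of ![![0, (d : ℂ), 0], ![(d : ℂ), 0, (d : ℂ)], ![0, (d : ℂ), 0]])
    (ψ : Fin 3 → ℂ)
    (hψ : ψ = (Real.sqrt 2 : ℂ)⁻¹ • ![1, 0, -1])
    (G : Submonoid (Matrix (Fin 3) (Fin 3) ℂ))
    (hG : G = Submonoid.closure
      {X | ∃ a b : ℝ, X = NormedSpace.exp (a • (Complex.I • H₀) + b • (Complex.I • H₁))}) :
    (∀ U ∈ G, ∀ v ∈ Submodule.span ℂ ({ψ} : Set (Fin 3 → ℂ)),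
      U.mulVec v ∈ Submodule.span ℂ ({ψ} : Set (Fin 3 → ℂ))) ∧
    ¬ (∀ φ₀ φ₁ : EuclideanSpace ℂ (Fin 3), ‖φ₀‖ = 1 → ‖φ₁‖ = 1 →
        ∃ U ∈ G, U.mulVec φ₀ = φ₁) := by
  set S := Submodule.span ℂ ({ψ} : Set (Fin 3 → ℂ)) with hS
  have hψ0 : ψ 0 = (Real.sqrt 2 : ℂ)⁻¹ := by rw [hψ]; simp
  have hψ1 : ψ 1 = 0 := by rw [hψ]; simp
  have hψ2 : ψ 2 = -(Real.sqrt 2 : ℂ)⁻¹ := by rw [hψ]; simp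
  have hH₀ψ : H₀.mulVec ψ = (E₁ : ℂ) • ψ := by
    subst hH₀
    funext i
    fin_cases i <;>
      simp [Matrix.mulVec, dotProduct, Fin.sum_univ_three, hψ0, hψ1, hψ2] <;> ring
  have hH₁ψ : H₁.mulVec ψ = 0 := by
    subst hH₁
    funext i
    fin_cases i <;>
      simp [Matrix.mulVec, dotProduct, Fin.sum_univ_three, hψ0, hψ1, hψ2] <;> ring
  -- every generator maps ψ into the line
  have hgen : ∀ a b : ℝ,
      (exp (a • (Complex.I • H₀) + b • (Complex.I • H₁))).mulVec ψ
        = exp ((a : ℂ) * Complex.I * E₁) • ψ := by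
    intro a b
    apply exp_mulVec_eigen'
    rw [Matrix.add_mulVec, Matrix.smul_mulVec, Matrix.smul_mulVec,
      Matrix.smul_mulVec, Matrix.smul_mulVec, hH₀ψ, hH₁ψ]
    simp only [smul_zero, add_zero]
    funext i
    simp only [Pi.smul_apply, smul_eq_mul, Complex.real_smul]
    ring
  have hinv : ∀ U ∈ G, ∀ v ∈ S, U.mulVec v ∈ S := by
    intro U hU
    rw [hG] at hU
    induction hU using Submonoid.closure_induction with
    | mem X hX =>
      obtain ⟨a, b, rfl⟩ := hX
      intro v hv
      obtain ⟨c, rfl⟩ := Submodule.mem_span_singleton.mp hv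
      rw [Matrix.mulVec_smul, hgen a b]
      exact Submodule.smul_mem _ _ (Submodule.smul_mem _ _ (Submodule.mem_span_singleton_self ψ))
    | one =>
      intro v hv
      rwa [Matrix.one_mulVec]
    | mul U V _ _ ihU ihV =>
      intro v hv
      rw [← Matrix.mulVec_mulVec]
      exact ihU _ (ihV _ hv)
  refine ⟨hinv, ?_⟩
  intro hcontr
  have hs2 : (0:ℝ) < Real.sqrt 2 := by positivity
  set φ₀ : EuclideanSpace ℂ (Fin 3) := (WithLp.equiv 2 (Fin 3 → ℂ)).symm ψ with hφ₀
  have hnψ : ‖φ₀‖ = 1 := by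
    rw [EuclideanSpace.norm_eq]
    have h0 : ∀ i, ‖φ₀ i‖ = ‖ψ i‖ := fun i => rfl
    rw [Fin.sum_univ_three, h0, h0, h0, hψ0, hψ1, hψ2, norm_neg]
    have h1 : ‖(Real.sqrt 2 : ℂ)⁻¹‖ = (Real.sqrt 2)⁻¹ := by
      rw [norm_inv, Complex.norm_real, Real.norm_eq_abs, abs_of_pos hs2]
    have h2 : Real.sqrt 2 ^ 2 = 2 := Real.sq_sqrt (by norm_num)
    rw [h1, show (Real.sqrt 2)⁻¹ ^ 2 + ‖(0:ℂ)‖ ^ 2 + (Real.sqrt 2)⁻¹ ^ 2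
        = (Real.sqrt 2 ^ 2)⁻¹ + (Real.sqrt 2 ^ 2)⁻¹ by rw [norm_zero]; ring, h2]
    norm_num
  set φ₁ : EuclideanSpace ℂ (Fin 3) := EuclideanSpace.single 0 1 with hφ₁
  have hnφ₁ : ‖φ₁‖ = 1 := by rw [hφ₁, EuclideanSpace.norm_single]; norm_num
  obtain ⟨U, hU, hUeq⟩ := hcontr φ₀ φ₁ hnψ hnφ₁
  have hmem : U.mulVec ψ ∈ S := hinv U hU ψ (Submodule.mem_span_singleton_self ψ)
  have hmem' : (φ₁ : Fin 3 → ℂ) ∈ S := by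
    have : U.mulVec ψ = (φ₁ : Fin 3 → ℂ) := hUeq
    rwa [this] at hmem
  obtain ⟨c, hc⟩ := Submodule.mem_span_singleton.mp hmem'
  have e2 : (φ₁ : Fin 3 → ℂ) 2 = 0 := by
    rw [hφ₁, EuclideanSpace.single_apply, if_neg (by decide)]
  have e0 : (φ₁ : Fin 3 → ℂ) 0 = 1 := by
    rw [hφ₁, EuclideanSpace.single_apply]; norm_num
  have h2 : c * ψ 2 = 0 := by
    have := congrFun hc 2
    rw [e2] at this
    simpa using this
  have hc0 : c = 0 := by
    rw [hψ2, mul_neg, neg_eq_zero, mul_eq_zero] at h2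
    rcases h2 with h | h
    · exact h
    · exfalso
      rw [inv_eq_zero, Complex.ofReal_eq_zero] at h
      exact hs2.ne' h
  have h0 : c * ψ 0 = 1 := by
    have := congrFun hc 0
    rw [e0] at this
    simpa using this
  rw [hc0, zero_mul] at h0
  exact zero_ne_one h0
end

section
/- If H₀ is strongly regular (distinct eigenvalues with pairwise distinct differences) and diagonal, then the iterated commutators of iH₀ with a matrix X can isolate individual off-diagonal matrix elements: the span of {ad_{iH₀}^k (iH₁) : k ≥ 0} together with iH₁ contains, for each pair (m,n) with (H₁)_{mn} ≠ 0, the skew-Hermitian matrices i(E_{mn} + E_{nm}) and (E_{mn} - E_{nm}). -/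
open Matrix

/-- For a strongly regular diagonal H₀, iterated commutators with iH₀ isolate
individual off-diagonal elements: for each pair (m,n) with (H₁)ₘₙ ≠ 0, the real
span of the iterated commutators ad_{iH₀}^k(iH₁) (together with iH₁) contains
the skew-Hermitian matrices i(Eₘₙ + Eₙₘ) and (Eₘₙ - Eₙₘ). -/
theorem strongly_regular_isolates_matrix_elements {N : ℕ}
    (E : Fin N → ℝ)
    (hreg : ∀ i j, i ≠ j → E i ≠ E j)
    (hsreg : ∀ i j m n, i ≠ j → m ≠ n → E i - E j = E m - E n → i = m ∧ j = n)
    (H₀ H₁ : Matrix (Fin N) (Fin N) ℂ)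
    (hH₀ : H₀ = Matrix.diagonal (fun i => (E i : ℂ)))
    (hH₁ : H₁.IsHermitian)
    (adH : Matrix (Fin N) (Fin N) ℂ → Matrix (Fin N) (Fin N) ℂ)
    (hadH : adH = fun X => (Complex.I • H₀) * X - X * (Complex.I • H₀)) :
    ∀ m n : Fin N, m ≠ n → H₁ m n ≠ 0 →
      Complex.I • (Matrix.single m n (1 : ℂ) + Matrix.single n m (1 : ℂ))
        ∈ Submodule.span ℝ ({Complex.I • H₁} ∪
            {X | ∃ k : ℕ, X = adH^[k] (Complex.I • H₁)}) ∧
      (Matrix.single m n (1 : ℂ) - Matrix.single n m (1 : ℂ))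
        ∈ Submodule.span ℝ ({Complex.I • H₁} ∪
            {X | ∃ k : ℕ, X = adH^[k] (Complex.I • H₁)}) := by
  intro m n hmn hne
  set S : Set (Matrix (Fin N) (Fin N) ℂ) :=
    {Complex.I • H₁} ∪ {X | ∃ k : ℕ, X = adH^[k] (Complex.I • H₁)} with hS
  -- entries of iterated commutators
  have hiter : ∀ (k : ℕ) (i j : Fin N), adH^[k] (Complex.I • H₁) i j
      = (Complex.I * ((E i : ℂ) - E j))^k * (Complex.I * H₁ i j) := by
    intro k
    induction k with
    | zero =>
      intro i j
      simp [Matrix.smul_apply, Complex.real_smul]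
    | succ k ih =>
      intro i j
      rw [Function.iterate_succ_apply']
      set Y := adH^[k] (Complex.I • H₁) with hY
      rw [hadH]
      simp only [Matrix.sub_apply]
      have h1 : ((Complex.I • H₀) * Y) i j = Complex.I * (E i) * Y i j := by
        rw [hH₀, Matrix.smul_mul, Matrix.smul_apply, Matrix.diagonal_mul, smul_eq_mul]
        ring
      have h2 : (Y * (Complex.I • H₀)) i j = Y i j * (Complex.I * (E j)) := by
        rw [hH₀, Matrix.mul_smul, Matrix.smul_apply, Matrix.mul_diagonal, smul_eq_mul]
        ring
      rw [h1, h2, ih i j, pow_succ]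
      ring
  -- the key polynomial lemma
  have key : ∀ (r : ℕ) (q : Polynomial ℝ),
      (Matrix.of fun i j : Fin N => ((q.eval (-(E i - E j)^2) : ℝ) : ℂ)
          * (Complex.I * ((E i : ℂ) - E j))^r * (Complex.I * H₁ i j))
        ∈ Submodule.span ℝ S := by
    intro r q
    have heq : (Matrix.of fun i j : Fin N => ((q.eval (-(E i - E j)^2) : ℝ) : ℂ)
          * (Complex.I * ((E i : ℂ) - E j))^r * (Complex.I * H₁ i j))
        = ∑ k ∈ Finset.range (q.natDegree + 1),
            q.coeff k • adH^[2*k + r] (Complex.I • H₁) := by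
      ext i j
      rw [Matrix.sum_apply]
      simp only [Matrix.smul_apply, hiter, Complex.real_smul, Matrix.of_apply]
      rw [Polynomial.eval_eq_sum_range]
      push_cast
      rw [Finset.sum_mul, Finset.sum_mul]
      apply Finset.sum_congr rfl
      intro k _
      have hP : (Complex.I * ((E i:ℂ) - E j))^(2*k+r)
          = (-(((E i:ℂ) - E j))^2)^k * (Complex.I * ((E i:ℂ) - E j))^r := by
        rw [pow_add, pow_mul]
        congr 2
        rw [mul_pow, Complex.I_sq]
        ring
      rw [hP]
      ring
    rw [heq]
    apply Submodule.sum_mem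
    intro k _
    exact Submodule.smul_mem _ _ (Submodule.subset_span (Or.inr ⟨2*k + r, rfl⟩))
  -- construct the interpolation polynomial
  set μ₀ : ℝ := -(E m - E n)^2 with hμ₀
  set t : Finset ℝ :=
    (Finset.image (fun p : Fin N × Fin N => -(E p.1 - E p.2)^2) Finset.univ) \ {μ₀} with ht
  set q : Polynomial ℝ :=
    (∏ μ ∈ t, (Polynomial.X - Polynomial.C μ)) * Polynomial.C (∏ μ ∈ t, (μ₀ - μ))⁻¹ with hq
  have hq0 : q.eval μ₀ = 1 := by
    rw [hq]
    simp only [Polynomial.eval_mul, Polynomial.eval_prod, Polynomial.eval_sub,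
      Polynomial.eval_X, Polynomial.eval_C]
    apply mul_inv_cancel₀
    rw [Finset.prod_ne_zero_iff]
    intro μ hμ
    have : μ ≠ μ₀ := by
      rw [ht] at hμ
      simpa using (Finset.mem_sdiff.mp hμ).2
    intro hc
    exact this (by linarith)
  have hqt : ∀ μ ∈ t, q.eval μ = 0 := by
    intro μ hμ
    rw [hq]
    simp only [Polynomial.eval_mul, Polynomial.eval_prod, Polynomial.eval_sub,
      Polynomial.eval_X, Polynomial.eval_C]
    rw [Finset.prod_eq_zero hμ (by ring)]
    ring
  -- evaluation facts at entry values
  have hvmn : q.eval (-(E m - E n)^2) = 1 := hq0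
  have hvnm : q.eval (-(E n - E m)^2) = 1 := by
    have : -(E n - E m)^2 = μ₀ := by rw [hμ₀]; ring
    rw [this]; exact hq0
  have hval : ∀ i j : Fin N, ¬(i = m ∧ j = n) → ¬(i = n ∧ j = m) →
      q.eval (-(E i - E j)^2) = 0 := by
    intro i j h1 h2
    apply hqt
    rw [ht, Finset.mem_sdiff]
    constructor
    · exact Finset.mem_image.mpr ⟨(i, j), Finset.mem_univ _, rfl⟩
    · rw [Finset.mem_singleton, hμ₀]
      intro hc
      have hsq : (E i - E j)^2 = (E m - E n)^2 := by linarith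
      rcases sq_eq_sq_iff_eq_or_eq_neg.mp hsq with h | h
      · by_cases hij : i = j
        · subst hij
          exact hreg m n hmn (by linarith)
        · exact absurd (hsreg i j m n hij hmn h) h1
      · by_cases hij : i = j
        · subst hij
          exact hreg m n hmn (by linarith)
        · exact absurd (hsreg i j n m hij (Ne.symm hmn) (by linarith)) h2
  -- abbreviations
  set a : ℝ := (H₁ m n).re with ha
  set b : ℝ := (H₁ m n).im with hb
  set ω : ℝ := E m - E n with hω
  have hω0 : ω ≠ 0 := sub_ne_zero.mpr (hreg m n hmn)
  have hd0 : a^2 + b^2 ≠ 0 := by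
    have := Complex.normSq_pos.mpr hne
    rw [Complex.normSq_apply] at this
    nlinarith
  have hωd : ω * (a^2 + b^2) ≠ 0 := mul_ne_zero hω0 hd0
  have hz : H₁ m n = (a : ℂ) + (b : ℂ) * Complex.I := (Complex.re_add_im _).symm
  have hznm : H₁ n m = (a : ℂ) - (b : ℂ) * Complex.I := by
    rw [← hH₁.apply n m, hz]
    simp [Complex.ext_iff]
  set M₀ : Matrix (Fin N) (Fin N) ℂ :=
    Matrix.of fun i j : Fin N => ((q.eval (-(E i - E j)^2) : ℝ) : ℂ)
      * (Complex.I * ((E i : ℂ) - E j))^0 * (Complex.I * H₁ i j) with hM₀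
  set M₁ : Matrix (Fin N) (Fin N) ℂ :=
    Matrix.of fun i j : Fin N => ((q.eval (-(E i - E j)^2) : ℝ) : ℂ)
      * (Complex.I * ((E i : ℂ) - E j))^1 * (Complex.I * H₁ i j) with hM₁
  have hM₀mem : M₀ ∈ Submodule.span ℝ S := key 0 q
  have hM₁mem : M₁ ∈ Submodule.span ℝ S := key 1 q
  have hent : ∀ (i j : Fin N) (c₁ c₂ : ℝ), (c₁ • M₀ + c₂ • M₁) i j
      = (c₁ : ℂ) * (((q.eval (-(E i - E j)^2) : ℝ) : ℂ) * (Complex.I * H₁ i j))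
        + (c₂ : ℂ) * (((q.eval (-(E i - E j)^2) : ℝ) : ℂ)
            * (Complex.I * ((E i : ℂ) - E j)) * (Complex.I * H₁ i j)) := by
    intro i j c₁ c₂
    simp only [hM₀, hM₁, Matrix.add_apply, Matrix.smul_apply, Matrix.of_apply,
      Complex.real_smul, pow_zero, pow_one]
    ring
  constructor
  · -- i (E_mn + E_nm)
    have e1 : Complex.I • (Matrix.single m n (1 : ℂ) + Matrix.single n m (1 : ℂ))
        = (ω * (a^2 + b^2))⁻¹ • ((ω * a) • M₀ + (-b) • M₁) := by
      rw [eq_inv_smul_iff₀ hωd]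
      ext i j
      rw [hent]
      by_cases h1 : i = m ∧ j = n
      · obtain ⟨rfl, rfl⟩ := h1
        rw [hvmn, hz]
        simp [Matrix.smul_apply, Complex.real_smul, Matrix.single, hmn, Ne.symm hmn]
        push_cast
        simp only [Complex.ext_iff, Complex.mul_re, Complex.mul_im, Complex.add_re,
          Complex.add_im, Complex.sub_re, Complex.sub_im, Complex.I_re, Complex.I_im,
          Complex.ofReal_re, Complex.ofReal_im, Complex.one_re, Complex.one_im,
          Complex.neg_re, Complex.neg_im, ← Complex.ofReal_pow]
        constructor <;> ring
      · by_cases h2 : i = n ∧ j = m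
        · obtain ⟨rfl, rfl⟩ := h2
          rw [hvnm, hznm]
          simp [Matrix.smul_apply, Complex.real_smul, Matrix.single, hmn, Ne.symm hmn]
          push_cast
          simp only [Complex.ext_iff, Complex.mul_re, Complex.mul_im, Complex.add_re,
            Complex.add_im, Complex.sub_re, Complex.sub_im, Complex.I_re, Complex.I_im,
            Complex.ofReal_re, Complex.ofReal_im, Complex.one_re, Complex.one_im,
            Complex.neg_re, Complex.neg_im, ← Complex.ofReal_pow]
          constructor <;> ring
        · rw [hval i j h1 h2]
          have hn1 : ¬(m = i ∧ n = j) := fun h => h1 ⟨h.1.symm, h.2.symm⟩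
          have hn2 : ¬(n = i ∧ m = j) := fun h => h2 ⟨h.1.symm, h.2.symm⟩
          simp [Matrix.smul_apply, Matrix.single, hn1, hn2]
    rw [e1]
    exact Submodule.smul_mem _ _ (Submodule.add_mem _ (Submodule.smul_mem _ _ hM₀mem)
      (Submodule.smul_mem _ _ hM₁mem))
  · -- E_mn - E_nm
    have e2 : (Matrix.single m n (1 : ℂ) - Matrix.single n m (1 : ℂ))
        = (ω * (a^2 + b^2))⁻¹ • ((-(ω * b)) • M₀ + (-a) • M₁) := by
      rw [eq_inv_smul_iff₀ hωd]
      ext i j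
      rw [hent]
      by_cases h1 : i = m ∧ j = n
      · obtain ⟨rfl, rfl⟩ := h1
        rw [hvmn, hz]
        simp [Matrix.smul_apply, Complex.real_smul, Matrix.single, hmn, Ne.symm hmn]
        push_cast
        simp only [Complex.ext_iff, Complex.mul_re, Complex.mul_im, Complex.add_re,
          Complex.add_im, Complex.sub_re, Complex.sub_im, Complex.I_re, Complex.I_im,
          Complex.ofReal_re, Complex.ofReal_im, Complex.one_re, Complex.one_im,
          Complex.neg_re, Complex.neg_im, ← Complex.ofReal_pow]
        constructor <;> ring
      · by_cases h2 : i = n ∧ j = m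
        · obtain ⟨rfl, rfl⟩ := h2
          rw [hvnm, hznm]
          simp [Matrix.smul_apply, Complex.real_smul, Matrix.single, hmn, Ne.symm hmn]
          push_cast
          simp only [Complex.ext_iff, Complex.mul_re, Complex.mul_im, Complex.add_re,
            Complex.add_im, Complex.sub_re, Complex.sub_im, Complex.I_re, Complex.I_im,
            Complex.ofReal_re, Complex.ofReal_im, Complex.one_re, Complex.one_im,
            Complex.neg_re, Complex.neg_im, ← Complex.ofReal_pow]
          constructor <;> ring
        · rw [hval i j h1 h2]
          have hn1 : ¬(m = i ∧ n = j) := fun h => h1 ⟨h.1.symm, h.2.symm⟩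
          have hn2 : ¬(n = i ∧ m = j) := fun h => h2 ⟨h.1.symm, h.2.symm⟩
          simp [Matrix.smul_apply, Matrix.single, hn1, hn2]
    rw [e2]
    exact Submodule.smul_mem _ _ (Submodule.add_mem _ (Submodule.smul_mem _ _ hM₀mem)
      (Submodule.smul_mem _ _ hM₁mem))
end
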